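/- If A ⊆ B, B has asymptotic density, then there exists C with asymptotic density such that A ⊆ C ⊆ B and d(C) = d̿̿(A). -/

import Mathlib

open Filter

/-- `cnt A n` = number of elements of `A` in `[1, n]`, as a real number. -/
noncomputable def cnt (A : Set ℕ) (n : ℕ) : ℝ :=
  ∑ k ∈ Finset.Icc 1 n, A.indicator (fun _ => (1 : ℝ)) k

/-- `A` has asymptotic density `x`. -/
def HasDens (A : Set ℕ) (x : ℝ) : Prop :=
  Filter.Tendsto (fun n => cnt A n / n) Filter.atTop (nhds x)

/-- `lld A` = sup of densities of subsets of `A` having asymptotic density. -/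
noncomputable def lld (A : Set ℕ) : ℝ := sSup {x : ℝ | ∃ B ⊆ A, HasDens B x}

/-- `uud A` = inf of densities of supersets of `A` having asymptotic density. -/
noncomputable def uud (A : Set ℕ) : ℝ := sInf {x : ℝ | ∃ C : Set ℕ, A ⊆ C ∧ HasDens C x}

/- ## Auxiliary lemmas about `cnt` -/

lemma ind_nonneg (A : Set ℕ) (k : ℕ) : 0 ≤ A.indicator (fun _ => (1 : ℝ)) k := by
  classical
  by_cases h : k ∈ A <;> simp [Set.indicator_apply, h]

lemma ind_le_one (A : Set ℕ) (k : ℕ) : A.indicator (fun _ => (1 : ℝ)) k ≤ 1 := by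
  classical
  by_cases h : k ∈ A <;> simp [Set.indicator_apply, h]

lemma cnt_zero (A : Set ℕ) : cnt A 0 = 0 := by simp [cnt]

lemma cnt_succ (A : Set ℕ) (n : ℕ) :
    cnt A (n + 1) = cnt A n + A.indicator (fun _ => (1 : ℝ)) (n + 1) := by
  unfold cnt
  rw [Finset.sum_Icc_succ_top (by omega)]

lemma cnt_nonneg (A : Set ℕ) (n : ℕ) : 0 ≤ cnt A n :=
  Finset.sum_nonneg fun k _ => ind_nonneg A k

lemma cnt_le (A : Set ℕ) (n : ℕ) : cnt A n ≤ n := by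
  calc cnt A n ≤ ∑ k ∈ Finset.Icc 1 n, (1 : ℝ) :=
        Finset.sum_le_sum fun k _ => ind_le_one A k
    _ = n := by simp

lemma cnt_eq_Ioc (A : Set ℕ) (n : ℕ) :
    cnt A n = ∑ k ∈ Finset.Ioc 0 n, A.indicator (fun _ => (1 : ℝ)) k := by
  unfold cnt
  have h : Finset.Icc 1 n = Finset.Ioc 0 n := by
    ext k
    simp only [Finset.mem_Icc, Finset.mem_Ioc]
    omega
  rw [h]

lemma cnt_diff_mono {A C : Set ℕ} (h : A ⊆ C) {k n : ℕ} (hkn : k ≤ n) :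
    cnt A n - cnt A k ≤ cnt C n - cnt C k := by
  have hA : cnt A k + ∑ j ∈ Finset.Ioc k n, A.indicator (fun _ => (1 : ℝ)) j = cnt A n := by
    rw [cnt_eq_Ioc, cnt_eq_Ioc]
    exact Finset.sum_Ioc_consecutive _ (Nat.zero_le k) hkn
  have hC : cnt C k + ∑ j ∈ Finset.Ioc k n, C.indicator (fun _ => (1 : ℝ)) j = cnt C n := by
    rw [cnt_eq_Ioc, cnt_eq_Ioc]
    exact Finset.sum_Ioc_consecutive _ (Nat.zero_le k) hkn
  have hsum : ∑ j ∈ Finset.Ioc k n, A.indicator (fun _ => (1 : ℝ)) j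
      ≤ ∑ j ∈ Finset.Ioc k n, C.indicator (fun _ => (1 : ℝ)) j := by
    apply Finset.sum_le_sum
    intro j _
    classical
    by_cases hj : j ∈ A
    · rw [Set.indicator_of_mem hj, Set.indicator_of_mem (h hj)]
    · rw [Set.indicator_of_notMem hj]
      exact ind_nonneg C j
  linarith

lemma cnt_mono_set {A C : Set ℕ} (h : A ⊆ C) (n : ℕ) : cnt A n ≤ cnt C n := by
  have h1 := cnt_diff_mono h (Nat.zero_le n)
  have h2 := cnt_zero A
  have h3 := cnt_zero C
  linarith

lemma dens_nonneg {C : Set ℕ} {x : ℝ} (h : HasDens C x) : 0 ≤ x :=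
  ge_of_tendsto' h fun n => div_nonneg (cnt_nonneg C n) (Nat.cast_nonneg n)

/-- Linear approximation from having a density. -/
lemma hasDens_approx {C : Set ℕ} {x : ℝ} (h : HasDens C x) {ε : ℝ} (hε : 0 < ε) :
    ∃ K : ℝ, 0 ≤ K ∧ ∀ n : ℕ, |cnt C n - x * n| ≤ ε * n + K := by
  rw [HasDens, Metric.tendsto_atTop] at h
  obtain ⟨N, hN⟩ := h ε hε
  refine ⟨(1 + |x|) * N, by positivity, fun n => ?_⟩
  by_cases hn : N ≤ n ∧ 1 ≤ n
  · obtain ⟨hn1, hn2⟩ := hn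
    have hnpos : (0 : ℝ) < n := by exact_mod_cast hn2
    have := hN n hn1
    rw [Real.dist_eq] at this
    have h2 : |cnt C n / n - x| * n ≤ ε * n := by
      apply mul_le_mul_of_nonneg_right (le_of_lt this) (le_of_lt hnpos)
    have h3 : |cnt C n / n - x| * n = |cnt C n - x * n| := by
      rw [← abs_of_pos hnpos, ← abs_mul]
      congr 1
      field_simp
      rw [abs_of_pos hnpos]; ring
    rw [h3] at h2
    have : (0:ℝ) ≤ (1 + |x|) * N := by positivity
    linarith
  · push_neg at hn
    have hnN : (n : ℝ) ≤ N := by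
      rcases le_or_gt N n with h1 | h1
      · have := hn h1; interval_cases n
        · simp
      · exact_mod_cast le_of_lt h1
    have h1 : |cnt C n - x * n| ≤ cnt C n + |x| * n := by
      calc |cnt C n - x * n| ≤ |cnt C n| + |x * n| := abs_sub _ _
        _ = cnt C n + |x| * n := by
            rw [abs_of_nonneg (cnt_nonneg C n), abs_mul, Nat.abs_cast]
    have h2 : cnt C n ≤ n := cnt_le C n
    have h3 : |x| * n ≤ |x| * N := by
      apply mul_le_mul_of_nonneg_left hnN (abs_nonneg x)
    have h4 : (0:ℝ) ≤ ε * n := by positivity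
    nlinarith
/- ## The greedy construction -/

open Classical in
/-- Counting function of the greedy set: pad `A` with elements of `B` whenever the
count is below the line `u * n`. -/
noncomputable def gcnt (A B : Set ℕ) (u : ℝ) : ℕ → ℝ
  | 0 => 0
  | n + 1 => gcnt A B u n +
      (if (n + 1 : ℕ) ∈ A ∨ ((n + 1 : ℕ) ∈ B ∧ gcnt A B u n + 1 ≤ u * ((n : ℝ) + 1))
        then 1 else 0)

open Classical in
lemma gcnt_succ (A B : Set ℕ) (u : ℝ) (n : ℕ) :
    gcnt A B u (n + 1) = gcnt A B u n +
      (if (n + 1 : ℕ) ∈ A ∨ ((n + 1 : ℕ) ∈ B ∧ gcnt A B u n + 1 ≤ u * ((n : ℝ) + 1))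
        then 1 else 0) := by
  rw [gcnt]

/-- The greedy set. -/
def Cgr (A B : Set ℕ) (u : ℝ) : Set ℕ :=
  {n | n ∈ A ∨ (n ∈ B ∧ gcnt A B u (n - 1) + 1 ≤ u * (n : ℝ))}

lemma Cgr_subset {A B : Set ℕ} (hAB : A ⊆ B) (u : ℝ) : Cgr A B u ⊆ B := by
  intro n hn
  rcases hn with h | h
  · exact hAB h
  · exact h.1

lemma subset_Cgr (A B : Set ℕ) (u : ℝ) : A ⊆ Cgr A B u := fun n hn => Or.inl hn

lemma cnt_Cgr (A B : Set ℕ) (u : ℝ) : ∀ n, cnt (Cgr A B u) n = gcnt A B u n := by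
  intro n
  induction n with
  | zero => rw [cnt_zero, gcnt]
  | succ n ih =>
    rw [cnt_succ, gcnt_succ, ih]
    congr 1
    classical
    have hmem : (n + 1 : ℕ) ∈ Cgr A B u ↔
        ((n + 1 : ℕ) ∈ A ∨ ((n + 1 : ℕ) ∈ B ∧ gcnt A B u n + 1 ≤ u * ((n : ℝ) + 1))) := by
      simp only [Cgr, Set.mem_setOf_eq, Nat.add_sub_cancel]
      push_cast
      rfl
    rw [Set.indicator_apply]
    simp only [hmem]


lemma gcnt_mono (A B : Set ℕ) (u : ℝ) (n : ℕ) :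
    gcnt A B u n ≤ gcnt A B u (n + 1) := by
  classical
  rw [gcnt_succ]
  split_ifs <;> linarith

/-- Upper invariant: the greedy count is either exactly `cnt A n`, or it is bounded by
`u * k` plus the growth of `A` since the last padding time `k`. -/
lemma gcnt_upper (A B : Set ℕ) (u : ℝ) :
    ∀ n : ℕ, gcnt A B u n = cnt A n ∨
      ∃ k : ℕ, 1 ≤ k ∧ k ≤ n ∧ gcnt A B u n ≤ u * k + (cnt A n - cnt A k) := by
  classical
  intro n
  induction n with
  | zero => left; rw [gcnt, cnt_zero]
  | succ n ih =>
    rw [gcnt_succ]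
    by_cases hc : (n + 1 : ℕ) ∈ A ∨ ((n + 1 : ℕ) ∈ B ∧ gcnt A B u n + 1 ≤ u * ((n : ℝ) + 1))
    · rw [if_pos hc]
      by_cases hA : (n + 1 : ℕ) ∈ A
      · have ha : cnt A (n + 1) = cnt A n + 1 := by
          rw [cnt_succ, Set.indicator_of_mem hA]
        rcases ih with h | ⟨k, hk1, hk2, hk3⟩
        · left; rw [ha, h]
        · right
          refine ⟨k, hk1, Nat.le_succ_of_le hk2, ?_⟩
          rw [ha]; linarith
      · have hrule : gcnt A B u n + 1 ≤ u * ((n : ℝ) + 1) := (hc.resolve_left hA).2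
        right
        refine ⟨n + 1, by omega, le_refl _, ?_⟩
        push_cast
        linarith
    · rw [if_neg hc]
      have hA : (n + 1 : ℕ) ∉ A := fun h => hc (Or.inl h)
      have ha : cnt A (n + 1) = cnt A n := by
        rw [cnt_succ, Set.indicator_of_notMem hA]; ring
      rcases ih with h | ⟨k, hk1, hk2, hk3⟩
      · left; rw [ha, ← h]; ring
      · right
        refine ⟨k, hk1, Nat.le_succ_of_le hk2, ?_⟩
        rw [ha]; linarith

/-- Lower invariant: either the greedy count is near the line `u * n`, or there is some
`m < n` where it was near the line and since then the greedy set took everything in `B`. -/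
lemma gcnt_lower_inv (A B : Set ℕ) (u : ℝ) :
    ∀ n : ℕ, u * n - 2 ≤ gcnt A B u n ∨
      ∃ m : ℕ, m < n ∧ u * m - 2 ≤ gcnt A B u m ∧
        gcnt A B u m + (cnt B n - cnt B (m + 1)) ≤ gcnt A B u n := by
  classical
  intro n
  induction n with
  | zero => left; rw [gcnt]; simp
  | succ n ih =>
    by_cases hg : u * ((n + 1 : ℕ) : ℝ) - 2 ≤ gcnt A B u (n + 1)
    · left; exact hg
    · right
      push_neg at hg
      push_cast at hg
      have hmono := gcnt_mono A B u n
      have hstep : cnt B (n + 1) - cnt B n ≤ gcnt A B u (n + 1) - gcnt A B u n := by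
        by_cases hBmem : (n + 1 : ℕ) ∈ B
        · have hcond : (n + 1 : ℕ) ∈ A ∨
              ((n + 1 : ℕ) ∈ B ∧ gcnt A B u n + 1 ≤ u * ((n : ℝ) + 1)) := by
            by_cases hA : (n + 1 : ℕ) ∈ A
            · exact Or.inl hA
            · exact Or.inr ⟨hBmem, by linarith⟩
          have hgs : gcnt A B u (n + 1) = gcnt A B u n + 1 := by
            rw [gcnt_succ, if_pos hcond]
          have hb : cnt B (n + 1) = cnt B n + 1 := by
            rw [cnt_succ, Set.indicator_of_mem hBmem]
          rw [hgs, hb]; linarith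
        · have hb : cnt B (n + 1) = cnt B n := by
            rw [cnt_succ, Set.indicator_of_notMem hBmem]; ring
          rw [hb]; linarith
      rcases ih with h | ⟨m, hm1, hm2, hm3⟩
      · exact ⟨n, Nat.lt_succ_self n, h, by linarith⟩
      · exact ⟨m, Nat.lt_succ_of_lt hm1, hm2, by linarith⟩

/-- Criterion: two-sided linear approximations give convergence of `g n / n`. -/
lemma tendsto_of_approx (g : ℕ → ℝ) (u : ℝ)
    (h : ∀ ε : ℝ, 0 < ε → ∃ K : ℝ, 0 ≤ K ∧ ∀ n : ℕ, |g n - u * n| ≤ ε * n + K) :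
    Tendsto (fun n : ℕ => g n / n) atTop (nhds u) := by
  rw [Metric.tendsto_atTop]
  intro ε hε
  obtain ⟨K, hK0, hK⟩ := h (ε / 2) (by positivity)
  obtain ⟨N, hN⟩ := exists_nat_gt (2 * K / ε + 1)
  refine ⟨max N 1, fun n hn => ?_⟩
  have hn1 : 1 ≤ n := le_trans (le_max_right N 1) hn
  have hnN : (N : ℝ) ≤ n := by exact_mod_cast le_trans (le_max_left N 1) hn
  have hnpos : (0 : ℝ) < n := by exact_mod_cast hn1
  rw [Real.dist_eq]
  have heq : g n / (n : ℝ) - u = (g n - u * n) / n := by field_simp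
  rw [heq, abs_div, abs_of_pos hnpos, div_lt_iff₀ hnpos]
  have h2 : (2 * K / ε + 1) * ε = 2 * K + ε := by
    field_simp
  have h3 : (2 * K / ε + 1) * ε < (N : ℝ) * ε := mul_lt_mul_of_pos_right hN hε
  have h4 : (N : ℝ) * ε ≤ (n : ℝ) * ε := mul_le_mul_of_nonneg_right hnN (le_of_lt hε)
  have h5 := hK n
  linarith

theorem stmt_16 (A B : Set ℕ) (hAB : A ⊆ B) (b : ℝ) (hB : HasDens B b) :
    ∃ C : Set ℕ, A ⊆ C ∧ C ⊆ B ∧ HasDens C (uud A) := by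
  classical
  have hSdef : uud A = sInf {x : ℝ | ∃ C : Set ℕ, A ⊆ C ∧ HasDens C x} := rfl
  have hbS : b ∈ {x : ℝ | ∃ C : Set ℕ, A ⊆ C ∧ HasDens C x} := ⟨B, hAB, hB⟩
  have hbdd : BddBelow {x : ℝ | ∃ C : Set ℕ, A ⊆ C ∧ HasDens C x} := by
    refine ⟨0, fun x hx => ?_⟩
    obtain ⟨C, _, hC⟩ := hx
    exact dens_nonneg hC
  have hne : Set.Nonempty {x : ℝ | ∃ C : Set ℕ, A ⊆ C ∧ HasDens C x} := ⟨b, hbS⟩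
  have hu0 : 0 ≤ (uud A) := by
    rw [hSdef]
    exact le_csInf hne fun x hx => by
      obtain ⟨C, _, hC⟩ := hx
      exact dens_nonneg hC
  have hub : (uud A) ≤ b := by
    rw [hSdef]
    exact csInf_le hbdd hbS
  refine ⟨Cgr A B (uud A), subset_Cgr A B (uud A), Cgr_subset hAB (uud A), ?_⟩
  have hcnt := cnt_Cgr A B (uud A)
  have key : Tendsto (fun n : ℕ => gcnt A B (uud A) n / n) atTop (nhds (uud A)) := by
    apply tendsto_of_approx
    intro ε hε
    have hlt : sInf {x : ℝ | ∃ C : Set ℕ, A ⊆ C ∧ HasDens C x} < (uud A) + ε / 3 := by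
      rw [← hSdef]; linarith
    obtain ⟨d, hdS, hdlt⟩ := exists_lt_of_csInf_lt hne hlt
    obtain ⟨C', hAC', hC'd⟩ := hdS
    have hud : (uud A) ≤ d := by
      rw [hSdef]
      exact csInf_le hbdd ⟨C', hAC', hC'd⟩
    obtain ⟨K₁, hK₁0, hK₁⟩ := hasDens_approx hC'd (show (0:ℝ) < ε/3 by positivity)
    obtain ⟨K₂, hK₂0, hK₂⟩ := hasDens_approx hB (show (0:ℝ) < ε/2 by positivity)
    refine ⟨2*K₁ + 2*K₂ + (uud A) + 2, by positivity, fun n => ?_⟩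
    rw [abs_le]
    constructor
    · -- lower bound : -(ε n + K) ≤ g n - (uud A) n
      rcases gcnt_lower_inv A B (uud A) n with h | ⟨m, hmn, hm2, hm3⟩
      · have hεn : (0:ℝ) ≤ ε * n := by positivity
        linarith
      · have hb1 := hK₂ n
        have hb2 := hK₂ (m+1)
        rw [abs_le] at hb1 hb2
        have hmn' : (m:ℝ) + 1 ≤ (n:ℝ) := by exact_mod_cast hmn
        have hbu : (uud A) * ((n:ℝ) - (m:ℝ) - 1) ≤ b * ((n:ℝ) - (m:ℝ) - 1) :=
          mul_le_mul_of_nonneg_right hub (by linarith)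
        have hεm : ε / 2 * ((m:ℝ) + 1) ≤ ε / 2 * (n:ℝ) :=
          mul_le_mul_of_nonneg_left hmn' (by positivity)
        push_cast at hb2
        nlinarith [hb1.1, hb1.2, hb2.1, hb2.2]
    · -- upper bound : g n - (uud A) n ≤ ε n + K
      rcases gcnt_upper A B (uud A) n with h | ⟨k, hk1, hkn, hk3⟩
      · have h1 : cnt A n ≤ cnt C' n := cnt_mono_set hAC' n
        have h2 := hK₁ n
        rw [abs_le] at h2
        have h3 : d * (n:ℝ) ≤ ((uud A) + ε/3) * n :=
          mul_le_mul_of_nonneg_right (le_of_lt hdlt) (Nat.cast_nonneg n)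
        have hεn : (0:ℝ) ≤ ε * n := by positivity
        nlinarith [h2.1, h2.2]
      · have h1 : cnt A n - cnt A k ≤ cnt C' n - cnt C' k := cnt_diff_mono hAC' hkn
        have h2 := hK₁ n
        have h2k := hK₁ k
        rw [abs_le] at h2 h2k
        have hdk : (uud A) * (k:ℝ) ≤ d * (k:ℝ) :=
          mul_le_mul_of_nonneg_right hud (Nat.cast_nonneg k)
        have h3 : d * (n:ℝ) ≤ ((uud A) + ε/3) * n :=
          mul_le_mul_of_nonneg_right (le_of_lt hdlt) (Nat.cast_nonneg n)
        have hkn' : (k:ℝ) ≤ (n:ℝ) := by exact_mod_cast hkn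
        have hεk : ε / 3 * (k:ℝ) ≤ ε / 3 * (n:ℝ) :=
          mul_le_mul_of_nonneg_left hkn' (by positivity)
        nlinarith [h2.1, h2.2, h2k.1, h2k.2]
  have hfun : (fun n : ℕ => cnt (Cgr A B (uud A)) n / n) = fun n : ℕ => gcnt A B (uud A) n / n :=
    funext fun n => by rw [hcnt n]
  rw [HasDens, hfun]
  exact key
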